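/- arXiv:1801.06078 — 2 statements merged into one kernel-verified Lean document; each statement's English description precedes it below -/
import Mathlib

section
/- Let c = c₊c₋ be a bipartite standard Coxeter element of a finite Coxeter system (W,S), where S = S₊ ⊎ S₋ with each part consisting of pairwise commuting simple reflections and c± the product of the elements of S±. Then the map L(w) = c₊ w c₋ is an involutive anti-automorphism of the poset (NC(W,c), ≤). -/
namespace NCpaper

open CoxeterSystem

variable {B : Type*} {W : Type*} [Group W] {M : CoxeterMatrix B}

/-- The absolute length: minimal length of a factorization into reflections. -/
noncomputable def absLength (cs : CoxeterSystem M W) (w : W) : ℕ :=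
  sInf {k | ∃ l : List W, (∀ t ∈ l, cs.IsReflection t) ∧ l.length = k ∧ l.prod = w}

/-- The absolute order: `v ≤ w` iff `ℓ_T w = ℓ_T (v⁻¹ w) + ℓ_T v`. -/
noncomputable def AbsLe (cs : CoxeterSystem M W) (v w : W) : Prop :=
  absLength cs w = absLength cs (v⁻¹ * w) + absLength cs v

/-- Cover relation of the absolute order. -/
noncomputable def AbsCovBy (cs : CoxeterSystem M W) (v w : W) : Prop :=
  cs.IsReflection (v⁻¹ * w) ∧ absLength cs w = absLength cs v + 1

/-- Generating relation of the Bruhat order: multiply by a reflection, length goes up. -/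
def BruhatGen (cs : CoxeterSystem M W) (v w : W) : Prop :=
  cs.IsReflection (v⁻¹ * w) ∧ cs.length v < cs.length w

/-- The Bruhat order. -/
def BruhatLe (cs : CoxeterSystem M W) : W → W → Prop := Relation.ReflTransGen (BruhatGen cs)

/-- The strict Bruhat order. -/
def BruhatLt (cs : CoxeterSystem M W) : W → W → Prop := Relation.TransGen (BruhatGen cs)

/-- The support of an element: simple reflections occurring in every (equivalently, some)
reduced word for it. -/
def supp (cs : CoxeterSystem M W) (w : W) : Set B :=
  {i | ∀ l : List B, cs.IsReduced l → cs.wordProd l = w → i ∈ l}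

/-- A standard Coxeter element: the product of all the simple reflections, each once,
in some order. -/
def IsStdCoxeterElement (cs : CoxeterSystem M W) (c : W) : Prop :=
  ∃ l : List B, l.Nodup ∧ (∀ i : B, i ∈ l) ∧ cs.wordProd l = c

/-- Generating relation for the order `⊏`: an absolute-order cover which is Bruhat-increasing. -/
noncomputable def SqGen (cs : CoxeterSystem M W) (v w : W) : Prop :=
  AbsCovBy cs v w ∧ BruhatLt cs v w

/-- The order `⊏`. -/
noncomputable def Sq (cs : CoxeterSystem M W) : W → W → Prop :=
  Relation.ReflTransGen (SqGen cs)

/-- Generating relation for the order `≪`: an absolute-order cover which is Bruhat-decreasing. -/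
noncomputable def LlGen (cs : CoxeterSystem M W) (v w : W) : Prop :=
  AbsCovBy cs v w ∧ BruhatLt cs w v

/-- The order `≪`. -/
noncomputable def Ll (cs : CoxeterSystem M W) : W → W → Prop :=
  Relation.ReflTransGen (LlGen cs)


lemma exists_conj (cs : CoxeterSystem M W) (x w : W) (k : ℕ)
    (h : ∃ l : List W, (∀ t ∈ l, cs.IsReflection t) ∧ l.length = k ∧ l.prod = w) :
    ∃ l : List W, (∀ t ∈ l, cs.IsReflection t) ∧ l.length = k ∧ l.prod = x * w * x⁻¹ := by
  obtain ⟨l, hl, hk, hp⟩ := h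
  refine ⟨l.map ⇑(MulAut.conj x), ?_, by simp [hk], ?_⟩
  · intro t ht
    simp only [List.mem_map] at ht
    obtain ⟨a, ha, rfl⟩ := ht
    simpa using (hl a ha).conj x
  · rw [← map_list_prod (MulAut.conj x) l, hp, MulAut.conj_apply]

lemma absLength_conj (cs : CoxeterSystem M W) (x w : W) :
    absLength cs (x * w * x⁻¹) = absLength cs w := by
  unfold absLength
  congr 1
  ext k
  constructor
  · intro h
    have := exists_conj cs x⁻¹ _ k h
    simpa [mul_assoc] using this
  · exact exists_conj cs x w k

lemma absLength_inv (cs : CoxeterSystem M W) (w : W) :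
    absLength cs w⁻¹ = absLength cs w := by
  have key : ∀ (v : W) (k : ℕ),
      (∃ l : List W, (∀ t ∈ l, cs.IsReflection t) ∧ l.length = k ∧ l.prod = v) →
      (∃ l : List W, (∀ t ∈ l, cs.IsReflection t) ∧ l.length = k ∧ l.prod = v⁻¹) := by
    intro v k ⟨l, hl, hk, hp⟩
    refine ⟨(l.map Inv.inv).reverse, ?_, by simp [hk], ?_⟩
    · intro t ht
      simp only [List.mem_reverse, List.mem_map] at ht
      obtain ⟨a, ha, rfl⟩ := ht
      exact (hl a ha).isReflection_inv
    · rw [← List.prod_inv_reverse, hp]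
  unfold absLength
  congr 1
  ext k
  constructor
  · intro h
    simpa using key w⁻¹ k h
  · exact key w k

lemma sq_one_of_comm (cs : CoxeterSystem M W) (l : List B)
    (h : ∀ i ∈ l, ∀ j ∈ l, cs.simple i * cs.simple j = cs.simple j * cs.simple i) :
    cs.wordProd l * cs.wordProd l = 1 := by
  induction l with
  | nil => simp
  | cons a t ih =>
    have hcomm : Commute (cs.simple a) (cs.wordProd t) := by
      unfold CoxeterSystem.wordProd
      apply Commute.list_prod_right
      intro y hy
      simp only [List.mem_map] at hy
      obtain ⟨j, hj, rfl⟩ := hy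
      exact h a (by simp) j (by simp [hj])
    rw [wordProd_cons]
    calc cs.simple a * cs.wordProd t * (cs.simple a * cs.wordProd t)
        = cs.simple a * (cs.wordProd t * cs.simple a) * cs.wordProd t := by group
      _ = cs.simple a * (cs.simple a * cs.wordProd t) * cs.wordProd t := by rw [← hcomm]
      _ = (cs.simple a * cs.simple a) * (cs.wordProd t * cs.wordProd t) := by group
      _ = 1 := by
          rw [cs.simple_mul_simple_self, one_mul,
            ih (fun i hi j hj => h i (by simp [hi]) j (by simp [hj]))]


/-- Proposition 3.5: for a bipartite standard Coxeter element `c = c₊c₋`, the map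
`L(w) = c₊ w c₋` is an involutive anti-automorphism of `(NC(W,c), ≤)`. -/
theorem stmt10 [Finite W] (cs : CoxeterSystem M W) (lp lm : List B)
    (hnp : lp.Nodup) (hnm : lm.Nodup)
    (hcover : ∀ i : B, i ∈ lp ∨ i ∈ lm) (hdisj : ∀ i : B, ¬ (i ∈ lp ∧ i ∈ lm))
    (hcp : ∀ i ∈ lp, ∀ j ∈ lp, cs.simple i * cs.simple j = cs.simple j * cs.simple i)
    (hcm : ∀ i ∈ lm, ∀ j ∈ lm, cs.simple i * cs.simple j = cs.simple j * cs.simple i)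
    (cp cm c : W) (hcpd : cp = cs.wordProd lp) (hcmd : cm = cs.wordProd lm)
    (hcdef : c = cp * cm) :
    (∀ w : W, AbsLe cs w c → AbsLe cs (cp * w * cm) c) ∧
    (∀ w : W, cp * (cp * w * cm) * cm = w) ∧
    (∀ v w : W, AbsLe cs v c → AbsLe cs w c →
      (AbsLe cs v w ↔ AbsLe cs (cp * w * cm) (cp * v * cm))) := by
  have hcp2 : cp * cp = 1 := by rw [hcpd]; exact sq_one_of_comm cs lp hcp
  have hcm2 : cm * cm = 1 := by rw [hcmd]; exact sq_one_of_comm cs lm hcm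
  have hcpi : cp⁻¹ = cp := by rw [inv_eq_iff_mul_eq_one, hcp2]
  have hcmi : cm⁻¹ = cm := by rw [inv_eq_iff_mul_eq_one, hcm2]
  -- length of L(w)
  have hA : ∀ w : W, absLength cs (cp * w * cm) = absLength cs (w⁻¹ * c) := by
    intro w
    have h1 : cp * (cp * w * cm) * cp⁻¹ = w * c⁻¹ := by
      rw [hcpi, hcdef, mul_inv_rev, hcpi, hcmi]
      calc cp * (cp * w * cm) * cp = (cp * cp) * (w * (cm * cp)) := by group
        _ = w * (cm * cp) := by rw [hcp2, one_mul]
        _ = _ := by group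
    calc absLength cs (cp * w * cm)
        = absLength cs (cp * (cp * w * cm) * cp⁻¹) := (absLength_conj cs cp _).symm
      _ = absLength cs (w * c⁻¹) := by rw [h1]
      _ = absLength cs ((w * c⁻¹)⁻¹)⁻¹ := by rw [inv_inv]
      _ = absLength cs (c * w⁻¹) := by rw [absLength_inv]; group
      _ = absLength cs (c⁻¹ * (c * w⁻¹) * c⁻¹⁻¹) := (absLength_conj cs c⁻¹ _).symm
      _ = absLength cs (w⁻¹ * c) := by group
  -- length of L(w)⁻¹ * L(v)
  have hB : ∀ v w : W, absLength cs ((cp * w * cm)⁻¹ * (cp * v * cm))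
      = absLength cs (w⁻¹ * v) := by
    intro v w
    have h1 : (cp * w * cm)⁻¹ * (cp * v * cm) = cm * (w⁻¹ * v) * cm⁻¹ := by
      rw [hcmi]
      calc (cp * w * cm)⁻¹ * (cp * v * cm)
          = cm⁻¹ * w⁻¹ * (cp⁻¹ * cp) * v * cm := by group
        _ = cm * (w⁻¹ * v) * cm := by rw [hcpi, hcp2, hcmi]; group
    rw [h1, absLength_conj]
  have hC : ∀ v w : W, absLength cs (w⁻¹ * v) = absLength cs (v⁻¹ * w) := by
    intro v w
    rw [← absLength_inv]; congr 1; group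
  have hBc : ∀ w : W, absLength cs ((cp * w * cm)⁻¹ * c) = absLength cs w := by
    intro w
    have h1 : (cp * w * cm)⁻¹ * c = cm * w⁻¹ * cm⁻¹ := by
      rw [hcdef, hcmi]
      calc (cp * w * cm)⁻¹ * (cp * cm)
          = cm⁻¹ * w⁻¹ * (cp⁻¹ * cp) * cm := by group
        _ = cm * w⁻¹ * cm := by rw [hcpi, hcp2, hcmi]; group
    rw [h1]
    have := absLength_conj cs cm w⁻¹
    rw [this, absLength_inv]
  refine ⟨?_, ?_, ?_⟩
  · intro w hw
    unfold AbsLe at hw ⊢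
    rw [hA, hBc]
    omega
  · intro w
    calc cp * (cp * w * cm) * cm = (cp * cp) * w * (cm * cm) := by group
      _ = w := by rw [hcp2, hcm2]; group
  · intro v w hv hw
    unfold AbsLe at hv hw ⊢
    rw [hA, hA, hB]
    rw [hC v w]
    omega

end NCpaper
end

section
/- In the symmetric group S₅ with simple transpositions, let v = (2 4) and w = (1 5)(2 3 4) (cycle notation). Then v ≤ w in absolute order and v ≤_B w in Bruhat order, but v ⊏ w does not hold, where ⊏ is the transitive closure of the relation: for absolute-order covers u ⋖ u′, u ⊏· u′ iff u <_B u′. -/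
namespace S5

open Equiv

/-- A transposition in `S₅`, i.e. a reflection. -/
def IsTransposition (t : Perm (Fin 5)) : Prop := ∃ a b : Fin 5, a ≠ b ∧ t = swap a b

/-- Absolute length: minimal number of transpositions. -/
noncomputable def absLength (w : Perm (Fin 5)) : ℕ :=
  sInf {k | ∃ l : List (Perm (Fin 5)),
    (∀ t ∈ l, IsTransposition t) ∧ l.length = k ∧ l.prod = w}

/-- The absolute order on `S₅`. -/
noncomputable def AbsLe (v w : Perm (Fin 5)) : Prop :=
  absLength w = absLength (v⁻¹ * w) + absLength v

/-- Cover relation of the absolute order. -/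
noncomputable def AbsCovBy (v w : Perm (Fin 5)) : Prop :=
  IsTransposition (v⁻¹ * w) ∧ absLength w = absLength v + 1

/-- The Coxeter length of a permutation: its number of inversions. -/
def len (w : Perm (Fin 5)) : ℕ :=
  (Finset.univ.filter (fun p : Fin 5 × Fin 5 => p.1 < p.2 ∧ w p.2 < w p.1)).card

/-- Generating relation of the Bruhat order. -/
def BruhatGen (v w : Perm (Fin 5)) : Prop :=
  IsTransposition (v⁻¹ * w) ∧ len v < len w

/-- The Bruhat order on `S₅`. -/
def BruhatLe : Perm (Fin 5) → Perm (Fin 5) → Prop := Relation.ReflTransGen BruhatGen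

/-- The strict Bruhat order on `S₅`. -/
def BruhatLt : Perm (Fin 5) → Perm (Fin 5) → Prop := Relation.TransGen BruhatGen

/-- Generating relation of the order `⊏`: Bruhat-increasing absolute covers. -/
noncomputable def SqGen (v w : Perm (Fin 5)) : Prop := AbsCovBy v w ∧ BruhatLt v w

/-- The order `⊏` on `S₅`. -/
noncomputable def Sq : Perm (Fin 5) → Perm (Fin 5) → Prop := Relation.ReflTransGen SqGen

-- auxiliary
lemma sign_of_list {l : List (Perm (Fin 5))} (h : ∀ t ∈ l, IsTransposition t) :
    Perm.sign l.prod = (-1 : ℤˣ) ^ l.length := by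
  induction l with
  | nil => simp
  | cons a l ih =>
    obtain ⟨x, y, hxy, rfl⟩ := h a List.mem_cons_self
    simp [Perm.sign_swap hxy, ih (fun t ht => h t (List.mem_cons_of_mem _ ht)), pow_succ,
      mul_comm]


instance (t : Perm (Fin 5)) : Decidable (IsTransposition t) :=
  inferInstanceAs (Decidable (∃ a b : Fin 5, a ≠ b ∧ t = swap a b))

lemma absLength_eq (w : Perm (Fin 5)) (l : List (Perm (Fin 5)))
    (hl : ∀ t ∈ l, IsTransposition t) (hp : l.prod = w)
    (hlb : ∀ l' : List (Perm (Fin 5)), (∀ t ∈ l', IsTransposition t) → l'.prod = w →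
      l.length ≤ l'.length) :
    absLength w = l.length := by
  have hmem : l.length ∈ {k | ∃ l' : List (Perm (Fin 5)),
      (∀ t ∈ l', IsTransposition t) ∧ l'.length = k ∧ l'.prod = w} := ⟨l, hl, rfl, hp⟩
  apply le_antisymm (Nat.sInf_le hmem)
  apply le_csInf ⟨l.length, hmem⟩
  rintro k ⟨l', h1, rfl, h3⟩
  exact hlb l' h1 h3

lemma abs_v : absLength (swap 1 3 : Perm (Fin 5)) = 1 := by
  apply absLength_eq _ [swap 1 3]
  · intro t ht; simp at ht; exact ⟨1, 3, by decide, ht⟩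
  · simp
  · intro l' hl hp
    have hs := sign_of_list hl
    rw [hp] at hs
    have h13 : Perm.sign (swap 1 3 : Perm (Fin 5)) = -1 := by decide
    rw [h13] at hs
    rcases Nat.even_or_odd l'.length with he | ho
    · rw [he.neg_one_pow] at hs; exact absurd hs.symm (by decide)
    · rcases ho with ⟨k, hk⟩; simp; omega
-- abbreviations
noncomputable section
lemma abs_w : absLength (swap 0 4 * (swap 1 2 * swap 2 3) : Perm (Fin 5)) = 3 := by
  apply absLength_eq _ [swap 0 4, swap 1 2, swap 2 3]
  · intro t ht; simp at ht
    rcases ht with h | h | h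
    · exact ⟨0, 4, by decide, h⟩
    · exact ⟨1, 2, by decide, h⟩
    · exact ⟨2, 3, by decide, h⟩
  · simp [mul_assoc]
  · intro l' hl hp
    have hs := sign_of_list hl
    rw [hp] at hs
    have hsw : Perm.sign (swap 0 4 * (swap 1 2 * swap 2 3) : Perm (Fin 5)) = -1 := by decide
    rw [hsw] at hs
    rcases Nat.even_or_odd l'.length with he | ho
    · rw [he.neg_one_pow] at hs; exact absurd hs.symm (by decide)
    · rcases ho with ⟨k, hk⟩
      simp only [List.length_cons, List.length_nil]
      by_contra hc
      push_neg at hc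
      interval_cases h : l'.length
      · omega
      · obtain ⟨t, rfl⟩ := List.length_eq_one_iff.mp h
        simp at hp
        have ht := hl t (by simp)
        rw [hp] at ht
        revert ht
        decide
      · omega

lemma abs_u : absLength (swap 0 4 * swap 1 2 : Perm (Fin 5)) = 2 := by
  apply absLength_eq _ [swap 0 4, swap 1 2]
  · intro t ht; simp at ht
    rcases ht with h | h
    · exact ⟨0, 4, by decide, h⟩
    · exact ⟨1, 2, by decide, h⟩
  · simp
  · intro l' hl hp
    have hs := sign_of_list hl
    rw [hp] at hs
    have hsw : Perm.sign (swap 0 4 * swap 1 2 : Perm (Fin 5)) = 1 := by decide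
    rw [hsw] at hs
    rcases Nat.even_or_odd l'.length with he | ho
    · simp only [List.length_cons, List.length_nil]
      by_contra hc
      push_neg at hc
      interval_cases h : l'.length
      · obtain rfl := List.length_eq_zero_iff.mp h
        simp at hp
        exact absurd hp.symm (by decide)
      · rcases he with ⟨k, hk⟩; omega
    · rw [ho.neg_one_pow] at hs; exact absurd hs.symm (by decide)

lemma sq_absLen {a b : Perm (Fin 5)} (h : Sq a b) : absLength a ≤ absLength b := by
  induction h with
  | refl => exact le_refl _
  | tail _ h2 ih => rw [h2.1.2]; omega

lemma lt_len {a b : Perm (Fin 5)} (h : BruhatLt a b) : len a < len b := by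
  induction h with
  | single h => exact h.2
  | tail _ h ih => exact lt_trans ih h.2

lemma key : ∀ a b : Fin 5, a ≠ b →
    IsTransposition ((swap 1 3 * swap a b : Perm (Fin 5))⁻¹ *
      (swap 0 4 * (swap 1 2 * swap 2 3))) →
    swap a b = (swap 0 4 : Perm (Fin 5)) ∨ swap a b = (swap 1 2 : Perm (Fin 5)) := by
  decide

/-- With `v = (2 4)` and `w = (1 5)(2 3 4)` (as permutations of `{0,…,4}`:
`v = (1 3)`, `w = (0 4)(1 2 3)`), we have `v ≤ w` in absolute order and
`v ≤_B w` in Bruhat order, but not `v ⊏ w`. -/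
theorem stmt13 :
    AbsLe (swap 1 3) (swap 0 4 * (swap 1 2 * swap 2 3)) ∧
    BruhatLe (swap 1 3) (swap 0 4 * (swap 1 2 * swap 2 3)) ∧
    ¬ Sq (swap 1 3) (swap 0 4 * (swap 1 2 * swap 2 3)) := by
  have hinv : (swap 1 3 : Perm (Fin 5))⁻¹ * (swap 0 4 * (swap 1 2 * swap 2 3))
      = swap 0 4 * swap 1 2 := by decide
  refine ⟨?_, ?_, ?_⟩
  · unfold AbsLe
    rw [hinv, abs_w, abs_u, abs_v]
  · -- chain v → v*(01) → *(04) → *(12) → *(24) = w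
    have s1 : BruhatGen (swap 1 3) (swap 1 3 * swap 0 1) :=
      ⟨⟨0, 1, by decide, by decide⟩, by decide⟩
    have s2 : BruhatGen (swap 1 3 * swap 0 1) (swap 1 3 * swap 0 1 * swap 0 4) :=
      ⟨⟨0, 4, by decide, by decide⟩, by decide⟩
    have s3 : BruhatGen (swap 1 3 * swap 0 1 * swap 0 4)
        (swap 1 3 * swap 0 1 * swap 0 4 * swap 1 2) :=
      ⟨⟨1, 2, by decide, by decide⟩, by decide⟩
    have s4 : BruhatGen (swap 1 3 * swap 0 1 * swap 0 4 * swap 1 2)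
        (swap 0 4 * (swap 1 2 * swap 2 3)) :=
      ⟨⟨2, 4, by decide, by decide⟩, by decide⟩
    exact Relation.ReflTransGen.head s1 (Relation.ReflTransGen.head s2
      (Relation.ReflTransGen.head s3 (Relation.ReflTransGen.single s4)))
  · intro hsq
    rcases (Relation.ReflTransGen.cases_head hsq) with heq | ⟨m, hvm, hmw⟩
    · exact absurd heq (by decide)
    have habsm : absLength m = 2 := by rw [hvm.1.2, abs_v]
    rcases (Relation.ReflTransGen.cases_head hmw) with heq | ⟨m2, hm2, hm2w⟩
    · rw [heq] at habsm; rw [abs_w] at habsm; omega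
    have habsm2 : absLength m2 = 3 := by rw [hm2.1.2, habsm]
    rcases (Relation.ReflTransGen.cases_head hm2w) with heq | ⟨m3, hm3, hm3w⟩
    · -- two-step chain v → m → w
      subst heq
      obtain ⟨a, b, hab, hmab⟩ := hvm.1.1
      have hm : m = swap 1 3 * swap a b := by
        rw [← hmab]; group
      rcases key a b hab (by rw [← hm]; exact hm2.1.1) with h | h
      · -- m = v * (0 4), len m = 10 > len w = 9
        rw [h] at hm
        have := lt_len hm2.2
        rw [hm] at this
        revert this
        decide
      · -- m = v * (1 2), len m = 2 < len v = 3
        rw [h] at hm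
        have := lt_len hvm.2
        rw [hm] at this
        revert this
        decide
    · have h4 : absLength m3 = 4 := by rw [hm3.1.2, habsm2]
      have := sq_absLen hm3w
      rw [h4, abs_w] at this
      omega
end

end S5
end
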